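/- Let f be a bounded conjugate-linear functional on H, let θ ∈ Θ with |θ| < ν₀/(2 L_a), and let 0 < ε < 1. Then there is a unique v₀ ∈ V₀ such that ε⁻² a_θ(ℳ_θ v₀, ℳ_θ ṽ) + b_θ(ℳ_θ v₀, ℳ_θ ṽ) = ⟨f, ℳ_θ ṽ⟩ for all ṽ ∈ V₀, and if u_{ε,θ} ∈ H satisfies ε⁻² a_θ(u_{ε,θ}, ũ) + b_θ(u_{ε,θ}, ũ) = ⟨f, ũ⟩ for all ũ ∈ H, then ε⁻² a_θ[u_{ε,θ} − ℳ_θ v₀] + b_θ[u_{ε,θ} − ℳ_θ v₀] ≤ 8 K² ν₀⁻¹ ε² ‖f‖_{*θ}² and b_θ[u_{ε,θ} − ℳ_θ v₀] ≤ 16 K⁴ ν₀⁻² ε⁴ ‖f‖_{*θ}². -/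

import Mathlib

set_option maxHeartbeats 1000000

noncomputable section

open scoped Classical

section SqAux

variable {E : Type*} [NormedAddCommGroup E] [InnerProductSpace ℂ E]

/-- A bounded non-negative sesquilinear form. -/
structure Sq (E : Type*) [NormedAddCommGroup E] [InnerProductSpace ℂ E] where
  B : E → E → ℂ
  addL : ∀ u v w : E, B (u + v) w = B u w + B v w
  smulL : ∀ (c : ℂ) (u w : E), B (c • u) w = c * B u w
  addR : ∀ u v w : E, B u (v + w) = B u v + B u w
  smulR : ∀ (c : ℂ) (u w : E), B u (c • w) = starRingEnd ℂ c * B u w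
  im0 : ∀ u : E, (B u u).im = 0
  nn : ∀ u : E, 0 ≤ (B u u).re
  bdd : ∃ C : ℝ, ∀ u w : E, ‖B u w‖ ≤ C * ‖u‖ * ‖w‖

namespace Sq

variable (T : Sq E)

lemma zeroL (w : E) : T.B 0 w = 0 := by
  have h := T.smulL 0 0 w; simpa using h

lemma zeroR (u : E) : T.B u 0 = 0 := by
  have h := T.smulR 0 u 0; simpa using h

lemma negL (u w : E) : T.B (-u) w = - T.B u w := by
  have h := T.smulL (-1) u w; simpa using h

lemma negR (u w : E) : T.B u (-w) = - T.B u w := by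
  have h := T.smulR (-1) u w; simpa using h

lemma subL (u v w : E) : T.B (u - v) w = T.B u w - T.B v w := by
  rw [sub_eq_add_neg, T.addL, T.negL]; ring

lemma subR (u v w : E) : T.B u (v - w) = T.B u v - T.B u w := by
  rw [sub_eq_add_neg, T.addR, T.negR]; ring

/-- Hermitian symmetry, from real diagonal. -/
lemma herm (x y : E) : T.B y x = starRingEnd ℂ (T.B x y) := by
  have h1 : (T.B (x + y) (x + y)).im = 0 := T.im0 _
  have h2 : (T.B (x + Complex.I • y) (x + Complex.I • y)).im = 0 := T.im0 _
  rw [T.addL, T.addR, T.addR] at h1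
  rw [T.addL, T.addR, T.addR, T.smulL, T.smulR, T.smulR, T.smulL] at h2
  have hx := T.im0 x
  have hy := T.im0 y
  set z := T.B x y with hz
  set w := T.B y x with hw
  simp only [Complex.add_im, Complex.mul_im, Complex.conj_re, Complex.conj_im,
    Complex.I_re, Complex.I_im, Complex.mul_re] at h1 h2 ⊢
  apply Complex.ext <;> simp only [Complex.conj_re, Complex.conj_im] <;> nlinarith [hx, hy]

lemma re_symm (x y : E) : (T.B y x).re = (T.B x y).re := by
  rw [T.herm x y]; simp

/-- Cauchy–Schwarz. -/
lemma cs (x y : E) : ‖T.B x y‖ ^ 2 ≤ (T.B x x).re * (T.B y y).re := by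
  set z := T.B x y with hz
  set A := (T.B x x).re with hA
  set D := (T.B y y).re with hD
  have hn : ‖z‖ ^ 2 = z.re ^ 2 + z.im ^ 2 := by
    rw [Complex.sq_norm, Complex.normSq_apply]; ring
  have hzz : z * starRingEnd ℂ z = ((‖z‖ ^ 2 : ℝ) : ℂ) := by
    rw [Complex.mul_conj, Complex.normSq_eq_norm_sq]
  have hzz' : starRingEnd ℂ z * z = ((‖z‖ ^ 2 : ℝ) : ℂ) := by rw [mul_comm]; exact hzz
  have key : ∀ s : ℝ, 0 ≤ A - 2 * s * ‖z‖ ^ 2 + s ^ 2 * ‖z‖ ^ 2 * D := by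
    intro s
    have h := T.nn (x + (-(s : ℂ) * z) • y)
    have hconj : starRingEnd ℂ (-(s : ℂ) * z) = -(s : ℂ) * starRingEnd ℂ z := by
      simp [map_mul, Complex.conj_ofReal]
    have hBexp : T.B (x + (-(s : ℂ) * z) • y) (x + (-(s : ℂ) * z) • y)
        = T.B x x - ((2 * s * ‖z‖ ^ 2 : ℝ) : ℂ) + ((s ^ 2 * ‖z‖ ^ 2 : ℝ) : ℂ) * T.B y y := by
      rw [T.addL, T.addR, T.addR, T.smulL, T.smulR, T.smulR, T.smulL, T.herm x y, hconj]
      push_cast at hzz hzz' ⊢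
      linear_combination (-(s : ℂ)) * hzz' + (-(s : ℂ)) * hzz
        + (s : ℂ) ^ 2 * (T.B y y) * hzz
    rw [hBexp] at h
    rw [Complex.add_re, Complex.sub_re, Complex.re_ofReal_mul, Complex.ofReal_re] at h
    linarith [h]
  have hq : ∀ x : ℝ, 0 ≤ (‖z‖ ^ 2 * D) * (x * x) + (-(2 * ‖z‖ ^ 2)) * x + A := by
    intro x; nlinarith [key x]
  have hdisc := discrim_le_zero (a := (‖z‖ ^ 2 * D)) (b := -(2 * ‖z‖ ^ 2)) (c := A) hq
  rw [discrim] at hdisc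
  rcases eq_or_lt_of_le (sq_nonneg ‖z‖) with h0 | h0
  · rw [← h0]; exact mul_nonneg (T.nn x) (T.nn y)
  · nlinarith [hdisc, h0]

lemma cs' (x y : E) : ‖T.B x y‖ ≤ Real.sqrt (T.B x x).re * Real.sqrt (T.B y y).re := by
  have h := T.cs x y
  have h1 : Real.sqrt (‖T.B x y‖ ^ 2) ≤ Real.sqrt ((T.B x x).re * (T.B y y).re) :=
    Real.sqrt_le_sqrt h
  rwa [Real.sqrt_sq (norm_nonneg _), Real.sqrt_mul (T.nn x)] at h1

lemma tendsto_diag (x : ℕ → E) (l : E) (hx : Filter.Tendsto x Filter.atTop (nhds l)) :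
    Filter.Tendsto (fun k => T.B (x k) (x k)) Filter.atTop (nhds (T.B l l)) := by
  obtain ⟨C, hC⟩ := T.bdd
  have hnorm : ∀ k, ‖T.B (x k) (x k) - T.B l l‖
      ≤ C * ‖x k - l‖ * ‖x k‖ + C * ‖l‖ * ‖x k - l‖ := by
    intro k
    have hdiff : T.B (x k) (x k) - T.B l l = T.B (x k - l) (x k) + T.B l (x k - l) := by
      rw [T.subL, T.subR]; ring
    rw [hdiff]
    exact (norm_add_le _ _).trans (add_le_add (hC _ _) (hC _ _))
  have h1 : Filter.Tendsto (fun k => ‖x k - l‖) Filter.atTop (nhds 0) := by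
    have := hx.sub_const l
    rw [sub_self] at this
    exact this.norm.congr' (by simp) |>.mono_right (by simp [norm_zero])
  have h2 : Filter.Tendsto (fun k => ‖x k‖) Filter.atTop (nhds ‖l‖) := hx.norm
  have h3 : Filter.Tendsto (fun k => C * ‖x k - l‖ * ‖x k‖ + C * ‖l‖ * ‖x k - l‖)
      Filter.atTop (nhds (C * 0 * ‖l‖ + C * ‖l‖ * 0)) :=
    ((tendsto_const_nhds.mul h1).mul h2).add (tendsto_const_nhds.mul h1)
  have h4 := squeeze_zero_norm hnorm (by simpa using h3)
  have h5 := h4.add_const (T.B l l)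
  simpa using h5

/-- The variational (Lax–Milgram / Riesz) lemma on a sequentially closed subspace. -/
lemma exists_unique_sol [CompleteSpace E] (c : ℝ) (hc : 0 < c)
    (hcoer : ∀ x : E, c * ‖x‖ ^ 2 ≤ (T.B x x).re)
    (M : Set E) (hM0 : (0 : E) ∈ M)
    (hMadd : ∀ x ∈ M, ∀ y ∈ M, x + y ∈ M)
    (hMsmul : ∀ (t : ℂ), ∀ x ∈ M, t • x ∈ M)
    (hMcl : ∀ (x : ℕ → E) (l : E), (∀ k, x k ∈ M) →
      Filter.Tendsto x Filter.atTop (nhds l) → l ∈ M)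
    (f : E → ℂ) (hfadd : ∀ x y, f (x + y) = f x + f y)
    (hfsmul : ∀ (t : ℂ) (x : E), f (t • x) = starRingEnd ℂ t * f x)
    (hfb : ∃ Cf : ℝ, ∀ x, ‖f x‖ ≤ Cf * ‖x‖) :
    ∃! x : E, x ∈ M ∧ ∀ m ∈ M, T.B x m = f m := by
  obtain ⟨Cf0, hCf0⟩ := hfb
  set Cf := max Cf0 0 with hCfdef
  have hCf : ∀ x, ‖f x‖ ≤ Cf * ‖x‖ := fun x =>
    (hCf0 x).trans (mul_le_mul_of_nonneg_right (le_max_left _ _) (norm_nonneg x))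
  have hCfnn : 0 ≤ Cf := le_max_right _ _
  have hf0 : f 0 = 0 := by
    have := hfadd 0 0; simpa using this.symm
  have hfsub : ∀ a b : E, f (a - b) = f a - f b := by
    intro a b
    have hneg : f (-b) = - f b := by
      have h := hfadd b (-b); rw [add_neg_cancel, hf0] at h
      linear_combination -h
    rw [sub_eq_add_neg, hfadd, hneg]; ring
  -- the quadratic functional
  set Q : E → ℝ := fun x => (T.B x x).re - 2 * (f x).re with hQdef
  have hfre : ∀ x, (f x).re ≤ Cf * ‖x‖ := fun x =>
    (Complex.re_le_norm _).trans (by exact hCf x)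
  have hlb : ∀ x, -(Cf ^ 2 / c) ≤ Q x := by
    intro x
    have h1 := hcoer x
    have h2 := hfre x
    have hd : c * (Cf ^ 2 / c) = Cf ^ 2 := mul_div_cancel₀ _ (ne_of_gt hc)
    have h3 : c * ‖x‖ ^ 2 - 2 * (Cf * ‖x‖) ≤ Q x := by
      simp only [hQdef]; nlinarith [h1, h2]
    nlinarith [sq_nonneg (c * ‖x‖ - Cf), hc, hd, h3]
  have hne : (Q '' M).Nonempty := ⟨Q 0, Set.mem_image_of_mem _ hM0⟩
  have hbdd : BddBelow (Q '' M) := by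
    refine ⟨-(Cf ^ 2 / c), ?_⟩
    rintro y ⟨x, hx, rfl⟩
    exact hlb x
  set d := sInf (Q '' M) with hddef
  have hseq : ∀ k : ℕ, ∃ x, x ∈ M ∧ Q x < d + 1 / (k + 1) := by
    intro k
    have hlt : d < d + 1 / ((k : ℝ) + 1) := by
      have : (0 : ℝ) < 1 / ((k : ℝ) + 1) := by positivity
      linarith
    obtain ⟨y, ⟨x, hx, rfl⟩, hylt⟩ := exists_lt_of_csInf_lt hne hlt
    exact ⟨x, hx, hylt⟩
  choose xs hxsM hxsQ using hseq
  have hdle : ∀ x ∈ M, d ≤ Q x := fun x hx => csInf_le hbdd (Set.mem_image_of_mem _ hx)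
  -- parallelogram-type estimate
  have hconjhalf : starRingEnd ℂ (2⁻¹ : ℂ) = 2⁻¹ := by
    have h : ((2 : ℂ))⁻¹ = (((2⁻¹ : ℝ)) : ℂ) := by norm_num
    rw [h, Complex.conj_ofReal]
  have hfhalf : ∀ u v : E, f ((2⁻¹ : ℂ) • (u + v)) = (2⁻¹ : ℂ) * (f u + f v) := by
    intro u v; rw [hfsmul, hconjhalf, hfadd]
  have hkey : ∀ k l : ℕ, c * ‖xs k - xs l‖ ^ 2 ≤ 2 * (1 / (k + 1) + 1 / (l + 1)) := by
    intro k l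
    set u := xs k with hu
    set v := xs l with hv
    have hmid : (2⁻¹ : ℂ) • (u + v) ∈ M := hMsmul _ _ (hMadd _ (hxsM k) _ (hxsM l))
    have hQmid : d ≤ Q ((2⁻¹ : ℂ) • (u + v)) := hdle _ hmid
    -- complex identities
    have hBmid : T.B ((2⁻¹ : ℂ) • (u + v)) ((2⁻¹ : ℂ) • (u + v))
        = (4⁻¹ : ℂ) * T.B (u + v) (u + v) := by
      rw [T.smulL, T.smulR, hconjhalf]; ring
    have hpll : T.B (u + v) (u + v) + T.B (u - v) (u - v) = 2 * T.B u u + 2 * T.B v v := by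
      rw [T.addL, T.addR, T.addR, T.subL, T.subR, T.subR]; ring
    have hQmidre : (T.B ((2⁻¹ : ℂ) • (u + v)) ((2⁻¹ : ℂ) • (u + v))).re
        = (4⁻¹ : ℝ) * (T.B (u + v) (u + v)).re := by
      rw [hBmid]
      have h4 : ((4⁻¹ : ℂ)) = (((4⁻¹ : ℝ)) : ℂ) := by norm_num
      rw [h4, Complex.re_ofReal_mul]
    have hfmidre : (f ((2⁻¹ : ℂ) • (u + v))).re = (2⁻¹ : ℝ) * ((f u).re + (f v).re) := by
      rw [hfhalf]
      have h2 : ((2⁻¹ : ℂ)) = (((2⁻¹ : ℝ)) : ℂ) := by norm_num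
      rw [h2, Complex.re_ofReal_mul, Complex.add_re]
    have hpllre : (T.B (u + v) (u + v)).re + (T.B (u - v) (u - v)).re
        = 2 * (T.B u u).re + 2 * (T.B v v).re := by
      have := congrArg Complex.re hpll
      simpa [Complex.add_re, Complex.mul_re] using this
    have hcoeruv := hcoer (u - v)
    have hQmid2 := hQmid
    simp only [hQdef] at hQmid2
    rw [hQmidre, hfmidre] at hQmid2
    have hQu' := hxsQ k
    have hQv' := hxsQ l
    simp only [hQdef, ← hu, ← hv] at hQu' hQv'
    linarith [hcoeruv, hpllre, hQmid2, hQu', hQv']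
  -- Cauchy sequence
  have hsqle : ∀ N n : ℕ, N ≤ n → 1 / ((n : ℝ) + 1) ≤ 1 / ((N : ℝ) + 1) := by
    intro N n h
    have hc' : ((N : ℝ) + 1) ≤ ((n : ℝ) + 1) := by
      have : (N : ℝ) ≤ (n : ℝ) := Nat.cast_le.mpr h
      linarith
    exact one_div_le_one_div_of_le (by positivity) hc'
  have hcau : CauchySeq xs := by
    refine cauchySeq_of_le_tendsto_0 (s := xs) (fun N => Real.sqrt ((4 / c) * (1 / ((N : ℝ) + 1)))) ?_ ?_
    · intro n m N hn hm
      rw [dist_eq_norm]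
      have h1 := hkey n m
      have hc0 : c ≠ 0 := ne_of_gt hc
      have hcc : (4 / c) * (1 / ((N : ℝ) + 1)) * c = 4 * (1 / ((N : ℝ) + 1)) := by
        field_simp
      have h3 : ‖xs n - xs m‖ ^ 2 ≤ (4 / c) * (1 / ((N : ℝ) + 1)) := by
        nlinarith [h1, hsqle N n hn, hsqle N m hm, hc, hcc]
      have h4 := Real.sqrt_le_sqrt h3
      rwa [Real.sqrt_sq (norm_nonneg _)] at h4
    · have h0 : Filter.Tendsto (fun N : ℕ => (4 / c) * (1 / ((N : ℝ) + 1)))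
          Filter.atTop (nhds ((4 / c) * 0)) :=
        tendsto_const_nhds.mul tendsto_one_div_add_atTop_nhds_zero_nat
      simpa [mul_zero, Real.sqrt_zero] using h0.sqrt
  obtain ⟨x, hxlim⟩ := cauchySeq_tendsto_of_complete hcau
  have hxM : x ∈ M := hMcl xs x hxsM hxlim
  have hBten := T.tendsto_diag xs x hxlim
  have hsubten : Filter.Tendsto (fun k => ‖xs k - x‖) Filter.atTop (nhds 0) := by
    have h := (hxlim.sub_const x).norm
    rw [sub_self] at h
    simpa using h
  have hften : Filter.Tendsto (fun k => f (xs k)) Filter.atTop (nhds (f x)) := by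
    have hnorm : ∀ k, ‖f (xs k) - f x‖ ≤ Cf * ‖xs k - x‖ := by
      intro k; rw [← hfsub]; exact hCf _
    have h2 : Filter.Tendsto (fun k => Cf * ‖xs k - x‖) Filter.atTop (nhds (Cf * 0)) :=
      tendsto_const_nhds.mul hsubten
    have h3 := squeeze_zero_norm hnorm (by simpa using h2)
    simpa using h3.add_const (f x)
  have hQten : Filter.Tendsto (fun k => Q (xs k)) Filter.atTop (nhds (Q x)) := by
    simp only [hQdef]
    exact ((Complex.continuous_re.tendsto _).comp hBten).sub
      (((Complex.continuous_re.tendsto _).comp hften).const_mul 2)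
  have hQxd : Q x = d := by
    have hge : d ≤ Q x := hdle x hxM
    have haux : Filter.Tendsto (fun k : ℕ => d + 1 / ((k : ℝ) + 1))
        Filter.atTop (nhds (d + 0)) :=
      tendsto_const_nhds.add tendsto_one_div_add_atTop_nhds_zero_nat
    have hle := le_of_tendsto_of_tendsto' hQten (by simpa using haux)
      (fun k => le_of_lt (hxsQ k))
    linarith
  -- Euler–Lagrange, real part
  have hre : ∀ m ∈ M, (T.B x m).re = (f m).re := by
    intro m hm
    set L := 2 * ((T.B x m).re - (f m).re) with hLdef
    set q := (T.B m m).re with hqdef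
    have hq0 : 0 ≤ q := T.nn m
    have hQt : ∀ t : ℝ, Q (x + (t : ℂ) • m) = Q x + t * L + t ^ 2 * q := by
      intro t
      have hconjt : starRingEnd ℂ ((t : ℂ)) = (t : ℂ) := Complex.conj_ofReal t
      have hB : T.B (x + (t : ℂ) • m) (x + (t : ℂ) • m)
          = T.B x x + ((t : ℂ) * (T.B x m + starRingEnd ℂ (T.B x m))
            + ((t ^ 2 : ℝ) : ℂ) * T.B m m) := by
        rw [T.addL, T.addR, T.addR, T.smulL, T.smulR, T.smulR, T.smulL, T.herm x m, hconjt]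
        push_cast; ring
      have hfx : f (x + (t : ℂ) • m) = f x + (t : ℂ) * f m := by
        rw [hfadd, hfsmul, hconjt]
      simp only [hQdef]
      rw [hB, hfx]
      simp only [Complex.add_re, Complex.re_ofReal_mul, Complex.conj_re]
      ring
    have hge2 : ∀ t : ℝ, 0 ≤ t * L + t ^ 2 * q := by
      intro t
      have hmem : x + (t : ℂ) • m ∈ M := hMadd _ hxM _ (hMsmul _ _ hm)
      have h1 := hdle _ hmem
      rw [hQt t, hQxd] at h1
      linarith
    have hL0 : L = 0 := by
      set t₀ := -(L / (q + 1)) with ht₀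
      have hqne : q + 1 ≠ 0 := by positivity
      have ht : t₀ * (q + 1) = -L := by
        rw [ht₀]; field_simp
      have h1 := hge2 t₀
      have ht2 : t₀ * (t₀ * (q + 1)) = t₀ * (-L) := by rw [ht]
      have hsq : t₀ ^ 2 ≤ 0 := by nlinarith [h1, ht2]
      have ht00 : t₀ = 0 := by nlinarith [sq_nonneg t₀, hsq]
      rw [ht00] at ht
      have h2 : (0 : ℝ) = -L := by simpa using ht
      linarith
    linarith [hL0]
  -- full complex equality
  have hsol : ∀ m ∈ M, T.B x m = f m := by
    intro m hm
    have h1 := hre m hm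
    have h2 := hre (Complex.I • m) (hMsmul _ _ hm)
    rw [T.smulR, hfsmul, Complex.conj_I] at h2
    have h2' : (T.B x m).im = (f m).im := by
      simpa [Complex.mul_re, Complex.neg_re, Complex.neg_im,
        Complex.I_re, Complex.I_im] using h2
    exact Complex.ext h1 h2'
  refine ⟨x, ⟨hxM, hsol⟩, ?_⟩
  rintro y ⟨hyM, hysol⟩
  have hyx : y - x ∈ M := by
    have := hMadd y hyM _ (hMsmul (-1) x hxM)
    simpa [sub_eq_add_neg, neg_one_smul] using this
  have h0 : T.B (y - x) (y - x) = 0 := by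
    rw [T.subL, hysol _ hyx, hsol _ hyx, sub_self]
  have hco := hcoer (y - x)
  rw [h0] at hco
  simp only [Complex.zero_re] at hco
  have h5 : ‖y - x‖ ^ 2 ≤ 0 := by nlinarith [hco, hc]
  have h6 : ‖y - x‖ ^ 2 = 0 := le_antisymm h5 (sq_nonneg _)
  have h7 : ‖y - x‖ = 0 := by
    exact pow_eq_zero_iff (two_ne_zero) |>.mp h6
  exact sub_eq_zero.mp (norm_eq_zero.mp h7)

/-- Sum of two forms. -/
def add (T1 T2 : Sq E) : Sq E where
  B x y := T1.B x y + T2.B x y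
  addL u v w := by rw [T1.addL, T2.addL]; ring
  smulL c u w := by rw [T1.smulL, T2.smulL]; ring
  addR u v w := by rw [T1.addR, T2.addR]; ring
  smulR c u w := by rw [T1.smulR, T2.smulR]; ring
  im0 u := by simp [Complex.add_im, T1.im0, T2.im0]
  nn u := by
    have h1 := T1.nn u; have h2 := T2.nn u
    simp only [Complex.add_re]; linarith
  bdd := by
    obtain ⟨C1, h1⟩ := T1.bdd
    obtain ⟨C2, h2⟩ := T2.bdd
    refine ⟨C1 + C2, fun u w => ?_⟩
    have := norm_add_le (T1.B u w) (T2.B u w)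
    nlinarith [h1 u w, h2 u w]

@[simp] lemma add_B (T1 T2 : Sq E) (x y : E) : (T1.add T2).B x y = T1.B x y + T2.B x y := rfl

/-- Scaling of a form by a non-negative real. -/
def rsmul (r : ℝ) (hr : 0 ≤ r) (T : Sq E) : Sq E where
  B x y := (r : ℂ) * T.B x y
  addL u v w := by rw [T.addL]; ring
  smulL c u w := by rw [T.smulL]; ring
  addR u v w := by rw [T.addR]; ring
  smulR c u w := by rw [T.smulR]; ring
  im0 u := by rw [Complex.im_ofReal_mul, T.im0, mul_zero]
  nn u := by rw [Complex.re_ofReal_mul]; exact mul_nonneg hr (T.nn u)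
  bdd := by
    obtain ⟨C, h⟩ := T.bdd
    refine ⟨r * C, fun u w => ?_⟩
    rw [norm_mul, Complex.norm_real, Real.norm_of_nonneg hr]
    calc r * ‖T.B u w‖ ≤ r * (C * ‖u‖ * ‖w‖) :=
          mul_le_mul_of_nonneg_left (h u w) hr
      _ = r * C * ‖u‖ * ‖w‖ := by ring

@[simp] lemma rsmul_B (r : ℝ) (hr : 0 ≤ r) (T : Sq E) (x y : E) :
    (T.rsmul r hr).B x y = (r : ℂ) * T.B x y := rfl

end Sq


end SqAux

/-- An abstract family of non-negative bounded sesquilinear forms `a θ`, `b θ`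
(linear in the first argument, conjugate-linear in the second) on a complex Hilbert
space `H`, parametrised by `θ` in a compact subset `Θ` of `ℝⁿ`, such that
`(·,·)_θ := a θ + b θ` is a family of inner products whose norms are equivalent
to the norm of `H`. -/
structure FormFamily (n : ℕ) (H : Type*) [NormedAddCommGroup H] [InnerProductSpace ℂ H]
    [CompleteSpace H] where
  Θ : Set (EuclideanSpace ℝ (Fin n))
  compactΘ : IsCompact Θ
  a : EuclideanSpace ℝ (Fin n) → H → H → ℂ
  b : EuclideanSpace ℝ (Fin n) → H → H → ℂ
  a_addL : ∀ θ ∈ Θ, ∀ u v w : H, a θ (u + v) w = a θ u w + a θ v w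
  a_smulL : ∀ θ ∈ Θ, ∀ (c : ℂ) (u w : H), a θ (c • u) w = c * a θ u w
  a_addR : ∀ θ ∈ Θ, ∀ u v w : H, a θ u (v + w) = a θ u v + a θ u w
  a_smulR : ∀ θ ∈ Θ, ∀ (c : ℂ) (u w : H), a θ u (c • w) = starRingEnd ℂ c * a θ u w
  a_nonneg : ∀ θ ∈ Θ, ∀ u : H, 0 ≤ (a θ u u).re
  a_im : ∀ θ ∈ Θ, ∀ u : H, (a θ u u).im = 0
  a_bdd : ∀ θ ∈ Θ, ∃ C : ℝ, ∀ u w : H, ‖a θ u w‖ ≤ C * ‖u‖ * ‖w‖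
  b_addL : ∀ θ ∈ Θ, ∀ u v w : H, b θ (u + v) w = b θ u w + b θ v w
  b_smulL : ∀ θ ∈ Θ, ∀ (c : ℂ) (u w : H), b θ (c • u) w = c * b θ u w
  b_addR : ∀ θ ∈ Θ, ∀ u v w : H, b θ u (v + w) = b θ u v + b θ u w
  b_smulR : ∀ θ ∈ Θ, ∀ (c : ℂ) (u w : H), b θ u (c • w) = starRingEnd ℂ c * b θ u w
  b_nonneg : ∀ θ ∈ Θ, ∀ u : H, 0 ≤ (b θ u u).re
  b_im : ∀ θ ∈ Θ, ∀ u : H, (b θ u u).im = 0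
  b_bdd : ∀ θ ∈ Θ, ∃ C : ℝ, ∀ u w : H, ‖b θ u w‖ ≤ C * ‖u‖ * ‖w‖
  equivNorm : ∀ θ ∈ Θ, ∃ c₁ c₂ : ℝ, 0 < c₁ ∧ ∀ u : H,
    c₁ * ‖u‖ ^ 2 ≤ (a θ u u).re + (b θ u u).re ∧
      (a θ u u).re + (b θ u u).re ≤ c₂ * ‖u‖ ^ 2

namespace FormFamily

variable {n : ℕ} {H : Type*} [NormedAddCommGroup H] [InnerProductSpace ℂ H] [CompleteSpace H]

/-- The inner product `(u, w)_θ := a θ u w + b θ u w`. -/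
def ip (S : FormFamily n H) (θ : EuclideanSpace ℝ (Fin n)) (u w : H) : ℂ :=
  S.a θ u w + S.b θ u w

/-- The squared `θ`-norm `‖u‖_θ ^ 2 = (u, u)_θ`. -/
def nsq (S : FormFamily n H) (θ : EuclideanSpace ℝ (Fin n)) (u : H) : ℝ :=
  (S.ip θ u u).re

/-- The `θ`-norm `‖u‖_θ`. -/
def nrm (S : FormFamily n H) (θ : EuclideanSpace ℝ (Fin n)) (u : H) : ℝ :=
  Real.sqrt (S.nsq θ u)

/-- The degeneracy subspace `V_θ = {v : a_θ[v] = 0}`. -/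
def V (S : FormFamily n H) (θ : EuclideanSpace ℝ (Fin n)) : Set H :=
  {v : H | S.a θ v v = 0}

/-- `W_θ`, the orthogonal complement of `V_θ` in `H` with respect to `(·,·)_θ`. -/
def W (S : FormFamily n H) (θ : EuclideanSpace ℝ (Fin n)) : Set H :=
  {w : H | ∀ v ∈ S.V θ, S.ip θ w v = 0}

end FormFamily

/-- `f : H → ℂ` is a bounded conjugate-linear functional. -/
def IsBddConjLinear {H : Type*} [NormedAddCommGroup H] [InnerProductSpace ℂ H]
    (f : H → ℂ) : Prop :=
  (∀ u v : H, f (u + v) = f u + f v) ∧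
    (∀ (c : ℂ) (u : H), f (c • u) = starRingEnd ℂ c * f u) ∧
    ∃ C : ℝ, ∀ u : H, ‖f u‖ ≤ C * ‖u‖

/-- The homogenised form `a^h_θ(v,vt) = a''₀(v,vt)θ·θ - a₀(N_θ v, N_θ vt)`. -/
def ahom {n : ℕ} {H : Type*} [NormedAddCommGroup H] [InnerProductSpace ℂ H] [CompleteSpace H]
    (S : FormFamily n H) (a'' : H → H → Fin n → Fin n → ℂ)
    (N : EuclideanSpace ℝ (Fin n) → H → H) (θ : EuclideanSpace ℝ (Fin n)) (v vt : H) : ℂ :=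
  (∑ j, ∑ k, a'' v vt j k * (θ j : ℂ) * (θ k : ℂ)) - S.a 0 (N θ v) (N θ vt)

theorem statement4
    {n : ℕ} (hn : 0 < n) {H : Type*} [NormedAddCommGroup H] [InnerProductSpace ℂ H]
    [CompleteSpace H] (S : FormFamily n H)
    (K : ℝ) (hK0 : 0 < K)
    (hK : ∀ θ₁ ∈ S.Θ, ∀ θ₂ ∈ S.Θ, ∀ u : H, S.nrm θ₁ u ≤ K * S.nrm θ₂ u)
    (La : ℝ) (hLa0 : 0 < La)
    (hLa : ∀ θ₁ ∈ S.Θ, ∀ θ₂ ∈ S.Θ, ∀ u w : H,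
      ‖S.a θ₁ u w - S.a θ₂ u w‖ ≤ La * ‖θ₁ - θ₂‖ * S.nrm θ₁ u * S.nrm θ₁ w)
    (h0 : (0 : EuclideanSpace ℝ (Fin n)) ∈ S.Θ)
    (ν₀ : ℝ) (hν₀ : 0 < ν₀)
    (hgap0 : ∀ w ∈ S.W 0, ν₀ * S.nsq 0 w ≤ (S.a 0 w w).re)
    (Ncal : EuclideanSpace ℝ (Fin n) → H → H)
    (hNcal : ∀ θ ∈ S.Θ, ‖θ‖ ≤ ν₀ / (2 * La) → ∀ v ∈ S.V 0,
      Ncal θ v ∈ S.W 0 ∧ ∀ w ∈ S.W 0, S.a θ (Ncal θ v) w = - S.a θ v w)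
    (ε : ℝ) (hε0 : 0 < ε) (hε1 : ε < 1)
    (θ : EuclideanSpace ℝ (Fin n)) (hθ : θ ∈ S.Θ) (hθr : ‖θ‖ < ν₀ / (2 * La))
    (f : H → ℂ) (hf : IsBddConjLinear f)
    (u : H) (hu : ∀ w : H, ((ε : ℂ) ^ 2)⁻¹ * S.a θ u w + S.b θ u w = f w)
    (M : ℝ) (hM : ∀ w : H, ‖f w‖ ≤ M * S.nrm θ w) :
    (∃! v₀ : H, v₀ ∈ S.V 0 ∧ ∀ vt ∈ S.V 0,
        ((ε : ℂ) ^ 2)⁻¹ * S.a θ (v₀ + Ncal θ v₀) (vt + Ncal θ vt) +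
            S.b θ (v₀ + Ncal θ v₀) (vt + Ncal θ vt) = f (vt + Ncal θ vt)) ∧
      ∀ v₀ ∈ S.V 0,
        (∀ vt ∈ S.V 0,
            ((ε : ℂ) ^ 2)⁻¹ * S.a θ (v₀ + Ncal θ v₀) (vt + Ncal θ vt) +
              S.b θ (v₀ + Ncal θ v₀) (vt + Ncal θ vt) = f (vt + Ncal θ vt)) →
          (ε ^ 2)⁻¹ * (S.a θ (u - (v₀ + Ncal θ v₀)) (u - (v₀ + Ncal θ v₀))).re +
                (S.b θ (u - (v₀ + Ncal θ v₀)) (u - (v₀ + Ncal θ v₀))).re ≤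
              8 * K ^ 2 * ν₀⁻¹ * ε ^ 2 * M ^ 2 ∧
            (S.b θ (u - (v₀ + Ncal θ v₀)) (u - (v₀ + Ncal θ v₀))).re ≤
              16 * K ^ 4 * (ν₀ ^ 2)⁻¹ * ε ^ 4 * M ^ 2 := by
  classical
  have hθhalf : ‖θ‖ ≤ ν₀ / (2 * La) := le_of_lt hθr
  obtain ⟨Ca, hCa⟩ := S.a_bdd θ hθ
  obtain ⟨Cb, hCb⟩ := S.b_bdd θ hθ
  obtain ⟨Ca0, hCa0⟩ := S.a_bdd 0 h0
  obtain ⟨Cb0, hCb0⟩ := S.b_bdd 0 h0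
  obtain ⟨c₁, c₂, hc₁, hcc⟩ := S.equivNorm θ hθ
  obtain ⟨d₁, d₂, hd₁, hdd⟩ := S.equivNorm 0 h0
  set aT : Sq H := ⟨S.a θ, S.a_addL θ hθ, S.a_smulL θ hθ, S.a_addR θ hθ, S.a_smulR θ hθ,
    S.a_im θ hθ, S.a_nonneg θ hθ, ⟨Ca, hCa⟩⟩ with haTdef
  set bT : Sq H := ⟨S.b θ, S.b_addL θ hθ, S.b_smulL θ hθ, S.b_addR θ hθ, S.b_smulR θ hθ,
    S.b_im θ hθ, S.b_nonneg θ hθ, ⟨Cb, hCb⟩⟩ with hbTdef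
  set aO : Sq H := ⟨S.a 0, S.a_addL 0 h0, S.a_smulL 0 h0, S.a_addR 0 h0, S.a_smulR 0 h0,
    S.a_im 0 h0, S.a_nonneg 0 h0, ⟨Ca0, hCa0⟩⟩ with haOdef
  set bO : Sq H := ⟨S.b 0, S.b_addL 0 h0, S.b_smulL 0 h0, S.b_addR 0 h0, S.b_smulR 0 h0,
    S.b_im 0 h0, S.b_nonneg 0 h0, ⟨Cb0, hCb0⟩⟩ with hbOdef
  set ipO : Sq H := aO.add bO with hipOdef
  have haTB : aT.B = S.a θ := rfl
  have hbTB : bT.B = S.b θ := rfl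
  have haOB : aO.B = S.a 0 := rfl
  have hipOB : ipO.B = S.ip 0 := rfl
  have hε2 : (0 : ℝ) < ε ^ 2 := by positivity
  have hεinv : (0 : ℝ) ≤ (ε ^ 2)⁻¹ := by positivity
  have hεge1 : (1 : ℝ) ≤ (ε ^ 2)⁻¹ := by
    have h1 : ε ^ 2 ≤ 1 := by nlinarith only [hε0, hε1]
    have h2 := inv_anti₀ hε2 h1
    simpa using h2
  set BE : Sq H := (aT.rsmul ((ε ^ 2)⁻¹) hεinv).add bT with hBEdef
  have hεc : (((ε : ℂ)) ^ 2)⁻¹ = ((((ε ^ 2)⁻¹ : ℝ)) : ℂ) := by norm_cast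
  have hBEB : ∀ x y : H, BE.B x y = ((ε : ℂ) ^ 2)⁻¹ * S.a θ x y + S.b θ x y := by
    intro x y; rw [hεc]; rfl
  have hBre : ∀ x y : H, (BE.B x y).re = (ε ^ 2)⁻¹ * (S.a θ x y).re + (S.b θ x y).re := by
    intro x y
    rw [show BE.B x y = ((((ε ^ 2)⁻¹ : ℝ)) : ℂ) * S.a θ x y + S.b θ x y from rfl,
      Complex.add_re, Complex.re_ofReal_mul]
  -- norm facts
  have hnsq : ∀ (θ' : EuclideanSpace ℝ (Fin n)) (x : H),
      S.nsq θ' x = (S.a θ' x x).re + (S.b θ' x x).re := by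
    intro θ' x; simp [FormFamily.nsq, FormFamily.ip, Complex.add_re]
  have hnsq0nn : ∀ x : H, 0 ≤ S.nsq 0 x := by
    intro x; rw [hnsq]
    have h1 := S.a_nonneg 0 h0 x; have h2 := S.b_nonneg 0 h0 x; linarith only [h1, h2]
  have hnsqθnn : ∀ x : H, 0 ≤ S.nsq θ x := by
    intro x; rw [hnsq]
    have h1 := S.a_nonneg θ hθ x; have h2 := S.b_nonneg θ hθ x; linarith only [h1, h2]
  have hnrm0 : ∀ x : H, S.nrm 0 x * S.nrm 0 x = S.nsq 0 x := fun x =>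
    Real.mul_self_sqrt (hnsq0nn x)
  have hnrmθ : ∀ x : H, S.nrm θ x * S.nrm θ x = S.nsq θ x := fun x =>
    Real.mul_self_sqrt (hnsqθnn x)
  have hnrm0nn : ∀ x : H, 0 ≤ S.nrm 0 x := fun x => Real.sqrt_nonneg _
  have hnrmθnn : ∀ x : H, 0 ≤ S.nrm θ x := fun x => Real.sqrt_nonneg _
  set d2 := max d₂ 0 with hd2def
  have hd2nn : (0 : ℝ) ≤ d2 := le_max_right _ _
  have hdd2 : ∀ x : H, S.nsq 0 x ≤ d2 * ‖x‖ ^ 2 := by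
    intro x
    have h1 := (hdd x).2
    have h2 : d₂ * ‖x‖ ^ 2 ≤ d2 * ‖x‖ ^ 2 :=
      mul_le_mul_of_nonneg_right (le_max_left _ _) (sq_nonneg _)
    have h3 := hnsq 0 x
    linarith only [h1, h2, h3]
  have hdd1 : ∀ x : H, d₁ * ‖x‖ ^ 2 ≤ S.nsq 0 x := by
    intro x; rw [hnsq]; exact (hdd x).1
  -- V and W basic facts
  have haO_vanish : ∀ v ∈ S.V 0, ∀ x : H, S.a 0 v x = 0 := by
    intro v hv x
    have hcs := aO.cs v x
    have hv' : aO.B v v = 0 := hv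
    rw [hv'] at hcs
    simp only [Complex.zero_re, zero_mul] at hcs
    have h2 : ‖aO.B v x‖ = 0 := by nlinarith only [norm_nonneg (aO.B v x), hcs]
    exact norm_eq_zero.mp h2
  have hV0 : (0 : H) ∈ S.V 0 := by
    show S.a 0 0 0 = 0
    have := aO.zeroL (0 : H); rwa [haOB] at this
  have hVadd : ∀ v ∈ S.V 0, ∀ v' ∈ S.V 0, v + v' ∈ S.V 0 := by
    intro v hv v' hv'
    show S.a 0 (v + v') (v + v') = 0
    rw [S.a_addL 0 h0, haO_vanish v hv, haO_vanish v' hv', add_zero]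
  have hVsmul : ∀ (c : ℂ), ∀ v ∈ S.V 0, c • v ∈ S.V 0 := by
    intro c v hv
    show S.a 0 (c • v) (c • v) = 0
    rw [S.a_smulL 0 h0, haO_vanish v hv, mul_zero]
  have hVneg : ∀ v ∈ S.V 0, -v ∈ S.V 0 := by
    intro v hv
    have := hVsmul (-1) v hv
    simpa [neg_one_smul] using this
  have hVsub : ∀ v ∈ S.V 0, ∀ v' ∈ S.V 0, v - v' ∈ S.V 0 := by
    intro v hv v' hv'
    have := hVadd v hv (-v') (hVneg v' hv')
    simpa [sub_eq_add_neg] using this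
  have hVclosed : ∀ (xk : ℕ → H) (l : H), (∀ k, xk k ∈ S.V 0) →
      Filter.Tendsto xk Filter.atTop (nhds l) → l ∈ S.V 0 := by
    intro xk l hk hlim
    show S.a 0 l l = 0
    have ht := aO.tendsto_diag xk l hlim
    have hz : (fun k => aO.B (xk k) (xk k)) = fun _ => (0 : ℂ) := funext fun k => hk k
    rw [hz] at ht
    have := tendsto_nhds_unique ht tendsto_const_nhds
    rwa [haOB] at this
  have hWadd : ∀ w ∈ S.W 0, ∀ w' ∈ S.W 0, w + w' ∈ S.W 0 := by
    intro w hw w' hw' v hv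
    have h1 := hw v hv
    have h2 := hw' v hv
    have t1 := ipO.addL w w' v
    rw [hipOB] at t1
    rw [t1, h1, h2, add_zero]
  have hWsmul : ∀ (c : ℂ), ∀ w ∈ S.W 0, c • w ∈ S.W 0 := by
    intro c w hw v hv
    have h1 := hw v hv
    have t1 := ipO.smulL c w v
    rw [hipOB] at t1
    rw [t1, h1, mul_zero]
  have hWneg : ∀ w ∈ S.W 0, -w ∈ S.W 0 := by
    intro w hw
    have := hWsmul (-1) w hw
    simpa [neg_one_smul] using this
  have hWsub : ∀ w ∈ S.W 0, ∀ w' ∈ S.W 0, w - w' ∈ S.W 0 := by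
    intro w hw w' hw'
    have := hWadd w hw (-w') (hWneg w' hw')
    simpa [sub_eq_add_neg] using this
  have hVW0 : ∀ x : H, x ∈ S.V 0 → x ∈ S.W 0 → x = 0 := by
    intro x hxV hxW
    have h1 := hxW x hxV
    have h2 := hdd1 x
    have h3 : S.nsq 0 x = 0 := by
      simp only [FormFamily.nsq, h1, Complex.zero_re]
    have h4 : ‖x‖ ^ 2 ≤ 0 := by nlinarith only [h2, hd₁, h3]
    have h5 : ‖x‖ ^ 2 = 0 := le_antisymm h4 (sq_nonneg _)
    have h6 : ‖x‖ = 0 := pow_eq_zero_iff two_ne_zero |>.mp h5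
    exact norm_eq_zero.mp h6
  have hipVW : ∀ v ∈ S.V 0, ∀ w ∈ S.W 0, S.ip 0 v w = 0 := by
    intro v hv w hw
    have h1 := hw v hv
    have h := ipO.herm w v
    rw [hipOB] at h
    rw [h, h1, map_zero]
  -- corrector facts
  have hNW : ∀ v ∈ S.V 0, Ncal θ v ∈ S.W 0 := fun v hv => (hNcal θ hθ hθhalf v hv).1
  have hNeq : ∀ v ∈ S.V 0, ∀ w ∈ S.W 0, S.a θ (Ncal θ v) w = - S.a θ v w :=
    fun v hv => (hNcal θ hθ hθhalf v hv).2
  have hMca : ∀ v ∈ S.V 0, ∀ w ∈ S.W 0, S.a θ (v + Ncal θ v) w = 0 := by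
    intro v hv w hw
    rw [S.a_addL θ hθ, hNeq v hv w hw]; ring
  have hMca' : ∀ v ∈ S.V 0, ∀ w ∈ S.W 0, S.a θ w (v + Ncal θ v) = 0 := by
    intro v hv w hw
    have h := aT.herm (v + Ncal θ v) w
    rw [haTB] at h
    rw [h, hMca v hv w hw, map_zero]
  have hLip0 : ∀ u' w' : H, ‖S.a 0 u' w' - S.a θ u' w'‖ ≤ La * ‖θ‖ * S.nrm 0 u' * S.nrm 0 w' := by
    intro u' w'
    have := hLa 0 h0 θ hθ u' w'
    simpa [zero_sub, norm_neg] using this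
  have hLahalf : La * ‖θ‖ ≤ ν₀ / 2 := by
    have h1 : La * ‖θ‖ ≤ La * (ν₀ / (2 * La)) :=
      mul_le_mul_of_nonneg_left hθhalf (le_of_lt hLa0)
    have hLane : La ≠ 0 := ne_of_gt hLa0
    have h2 : La * (ν₀ / (2 * La)) = ν₀ / 2 := by field_simp
    linarith only [h1, h2]
  have hcoW : ∀ w ∈ S.W 0, ν₀ / 2 * S.nsq 0 w ≤ (S.a θ w w).re := by
    intro w hw
    have h1 := hgap0 w hw
    have h2 := hLip0 w w
    have h3 : (S.a 0 w w).re - (S.a θ w w).re ≤ ‖S.a 0 w w - S.a θ w w‖ := by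
      have h := Complex.re_le_norm (S.a 0 w w - S.a θ w w)
      rw [Complex.sub_re] at h
      linarith only [h]
    have h4 := hnrm0 w
    have h5 : La * ‖θ‖ * S.nsq 0 w ≤ ν₀ / 2 * S.nsq 0 w :=
      mul_le_mul_of_nonneg_right hLahalf (hnsq0nn w)
    have h4' : La * ‖θ‖ * (S.nrm 0 w * S.nrm 0 w) = La * ‖θ‖ * S.nsq 0 w := by rw [h4]
    nlinarith only [h1, h2, h3, h4', h5]
  have hKsq : ∀ x : H, S.nsq θ x ≤ K ^ 2 * S.nsq 0 x := by
    intro x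
    have h := hK θ hθ 0 h0 x
    have h2 := mul_self_le_mul_self (hnrmθnn x) h
    have h3 : K ^ 2 * (S.nrm 0 x * S.nrm 0 x) = K ^ 2 * S.nsq 0 x := by rw [hnrm0 x]
    nlinarith only [h2, hnrmθ x, h3]
  have hWzero : ∀ w ∈ S.W 0, S.a θ w w = 0 → w = 0 := by
    intro w hw hz
    have h1 := hcoW w hw
    rw [hz] at h1
    simp only [Complex.zero_re] at h1
    have h2 : S.nsq 0 w ≤ 0 := by nlinarith only [h1, hν₀, hnsq0nn w]
    have h3 := hdd1 w
    have h4 : ‖w‖ ^ 2 ≤ 0 := by nlinarith only [h3, hd₁, h2, sq_nonneg ‖w‖]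
    have h5 : ‖w‖ ^ 2 = 0 := le_antisymm h4 (sq_nonneg _)
    exact norm_eq_zero.mp (pow_eq_zero_iff two_ne_zero |>.mp h5)
  have hNuniq : ∀ w ∈ S.W 0, (∀ w' ∈ S.W 0, S.a θ w w' = 0) → w = 0 :=
    fun w hw h => hWzero w hw (h w hw)
  have hNadd : ∀ v ∈ S.V 0, ∀ v' ∈ S.V 0, Ncal θ (v + v') = Ncal θ v + Ncal θ v' := by
    intro v hv v' hv'
    have hD : Ncal θ (v + v') - (Ncal θ v + Ncal θ v') ∈ S.W 0 :=
      hWsub _ (hNW _ (hVadd v hv v' hv')) _ (hWadd _ (hNW v hv) _ (hNW v' hv'))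
    have hz : ∀ w' ∈ S.W 0, S.a θ (Ncal θ (v + v') - (Ncal θ v + Ncal θ v')) w' = 0 := by
      intro w' hw'
      have e1 := aT.subL (Ncal θ (v + v')) (Ncal θ v + Ncal θ v') w'
      have e2 := aT.addL (Ncal θ v) (Ncal θ v') w'
      rw [haTB] at e1 e2
      rw [e1, e2, hNeq _ (hVadd v hv v' hv') w' hw', hNeq v hv w' hw', hNeq v' hv' w' hw',
        S.a_addL θ hθ]
      ring
    exact sub_eq_zero.mp (hNuniq _ hD hz)
  have hNsmul : ∀ (c : ℂ), ∀ v ∈ S.V 0, Ncal θ (c • v) = c • Ncal θ v := by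
    intro c v hv
    have hD : Ncal θ (c • v) - c • Ncal θ v ∈ S.W 0 :=
      hWsub _ (hNW _ (hVsmul c v hv)) _ (hWsmul c _ (hNW v hv))
    have hz : ∀ w' ∈ S.W 0, S.a θ (Ncal θ (c • v) - c • Ncal θ v) w' = 0 := by
      intro w' hw'
      have e1 := aT.subL (Ncal θ (c • v)) (c • Ncal θ v) w'
      have e2 := aT.smulL c (Ncal θ v) w'
      rw [haTB] at e1 e2
      rw [e1, e2, hNeq _ (hVsmul c v hv) w' hw', hNeq v hv w' hw', S.a_smulL θ hθ]
      ring
    exact sub_eq_zero.mp (hNuniq _ hD hz)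
  have hN0 : Ncal θ (0 : H) = 0 := by
    have h := hNsmul 0 0 hV0
    simpa using h
  have hNneg : ∀ v ∈ S.V 0, Ncal θ (-v) = - Ncal θ v := by
    intro v hv
    have := hNsmul (-1) v hv
    simpa [neg_one_smul] using this
  have hNsub : ∀ v ∈ S.V 0, ∀ v' ∈ S.V 0, Ncal θ (v - v') = Ncal θ v - Ncal θ v' := by
    intro v hv v' hv'
    rw [sub_eq_add_neg, hNadd v hv _ (hVneg v' hv'), hNneg v' hv', sub_eq_add_neg]
  have hNbd : ∀ v ∈ S.V 0, S.nsq 0 (Ncal θ v) ≤ S.nsq 0 v := by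
    intro v hv
    have hwW := hNW v hv
    have h1 := hcoW (Ncal θ v) hwW
    have h2 : S.a θ (Ncal θ v) (Ncal θ v) = - S.a θ v (Ncal θ v) := hNeq v hv _ hwW
    have h3 : ‖S.a θ v (Ncal θ v)‖ = ‖S.a 0 v (Ncal θ v) - S.a θ v (Ncal θ v)‖ := by
      rw [haO_vanish v hv, zero_sub, norm_neg]
    have h5 := hLip0 v (Ncal θ v)
    have h6 : (S.a θ (Ncal θ v) (Ncal θ v)).re ≤ ‖S.a θ v (Ncal θ v)‖ := by
      rw [h2]
      have := Complex.re_le_norm (- S.a θ v (Ncal θ v))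
      rw [norm_neg] at this
      exact this
    have h7 : La * ‖θ‖ * S.nrm 0 v * S.nrm 0 (Ncal θ v)
        ≤ ν₀ / 2 * (S.nrm 0 v * S.nrm 0 (Ncal θ v)) := by
      have hnn : 0 ≤ S.nrm 0 v * S.nrm 0 (Ncal θ v) :=
        mul_nonneg (hnrm0nn v) (hnrm0nn (Ncal θ v))
      nlinarith only [mul_le_mul_of_nonneg_right hLahalf hnn]
    have h8 : S.nsq 0 (Ncal θ v) ≤ S.nrm 0 v * S.nrm 0 (Ncal θ v) := by
      nlinarith only [h1, h5, h6, h3, h7, hν₀]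
    nlinarith only [h8, hnrm0 (Ncal θ v), hnrm0 v, hnrm0nn (Ncal θ v), hnrm0nn v,
      sq_nonneg (S.nrm 0 (Ncal θ v) - S.nrm 0 v)]
  have hpyth : ∀ v ∈ S.V 0, ∀ w ∈ S.W 0, S.nsq 0 (v + w) = S.nsq 0 v + S.nsq 0 w := by
    intro v hv w hw
    have e1 := ipO.addL v w (v + w)
    have e2 := ipO.addR v v w
    have e3 := ipO.addR w v w
    rw [hipOB] at e1 e2 e3
    have h1 := hipVW v hv w hw
    have h2 := hw v hv
    have h3 : S.ip 0 (v + w) (v + w) = S.ip 0 v v + S.ip 0 w w := by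
      rw [e1, e2, e3, h1, h2]; ring
    simp only [FormFamily.nsq, h3, Complex.add_re]
  -- the Galerkin subspace
  set MG : Set H := {x : H | ∃ v ∈ S.V 0, x = v + Ncal θ v} with hMGdef
  have hMG0 : (0 : H) ∈ MG := ⟨0, hV0, by rw [hN0, add_zero]⟩
  have hMGadd : ∀ x ∈ MG, ∀ y ∈ MG, x + y ∈ MG := by
    rintro x ⟨v, hv, rfl⟩ y ⟨v', hv', rfl⟩
    exact ⟨v + v', hVadd v hv v' hv', by rw [hNadd v hv v' hv']; abel⟩
  have hMGsmul : ∀ (c : ℂ), ∀ x ∈ MG, c • x ∈ MG := by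
    rintro c x ⟨v, hv, rfl⟩
    exact ⟨c • v, hVsmul c v hv, by rw [hNsmul c v hv, smul_add]⟩
  set c' := Real.sqrt (d2 / d₁) with hc'def
  have hc'nn : 0 ≤ c' := Real.sqrt_nonneg _
  have hd2d1 : (0 : ℝ) ≤ d2 / d₁ := div_nonneg hd2nn (le_of_lt hd₁)
  have hbound : ∀ p ∈ S.V 0, ∀ q ∈ S.W 0, ‖p‖ ≤ c' * ‖p + q‖ := by
    intro p hp q hq
    have h1 := hpyth p hp q hq
    have h2 := hdd1 p
    have h3 := hdd2 (p + q)
    have h4 := hnsq0nn q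
    have h5 : ‖p‖ ^ 2 ≤ d2 / d₁ * ‖p + q‖ ^ 2 := by
      rw [div_mul_eq_mul_div, le_div_iff₀ hd₁]
      nlinarith only [h1, h2, h3, h4]
    calc ‖p‖ = Real.sqrt (‖p‖ ^ 2) := (Real.sqrt_sq (norm_nonneg _)).symm
      _ ≤ Real.sqrt (d2 / d₁ * ‖p + q‖ ^ 2) := Real.sqrt_le_sqrt h5
      _ = c' * ‖p + q‖ := by
          rw [Real.sqrt_mul hd2d1, Real.sqrt_sq (norm_nonneg _), hc'def]
  have hNlip : ∀ p ∈ S.V 0, ‖Ncal θ p‖ ≤ c' * ‖p‖ := by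
    intro p hp
    have h1 := hNbd p hp
    have h2 := hdd1 (Ncal θ p)
    have h3 := hdd2 p
    have h5 : ‖Ncal θ p‖ ^ 2 ≤ d2 / d₁ * ‖p‖ ^ 2 := by
      rw [div_mul_eq_mul_div, le_div_iff₀ hd₁]
      nlinarith only [h1, h2, h3]
    calc ‖Ncal θ p‖ = Real.sqrt (‖Ncal θ p‖ ^ 2) := (Real.sqrt_sq (norm_nonneg _)).symm
      _ ≤ Real.sqrt (d2 / d₁ * ‖p‖ ^ 2) := Real.sqrt_le_sqrt h5
      _ = c' * ‖p‖ := by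
          rw [Real.sqrt_mul hd2d1, Real.sqrt_sq (norm_nonneg _), hc'def]
  have hMGclosed : ∀ (xk : ℕ → H) (l : H), (∀ k, xk k ∈ MG) →
      Filter.Tendsto xk Filter.atTop (nhds l) → l ∈ MG := by
    intro xk l hk hlim
    choose vs hvsV hvs using hk
    have hvdist : ∀ k j : ℕ, dist (vs k) (vs j) ≤ c' * dist (xk k) (xk j) := by
      intro k j
      rw [dist_eq_norm, dist_eq_norm]
      have hpV : vs k - vs j ∈ S.V 0 := hVsub _ (hvsV k) _ (hvsV j)
      have hqW : Ncal θ (vs k) - Ncal θ (vs j) ∈ S.W 0 :=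
        hWsub _ (hNW _ (hvsV k)) _ (hNW _ (hvsV j))
      have h := hbound _ hpV _ hqW
      have heq : vs k - vs j + (Ncal θ (vs k) - Ncal θ (vs j)) = xk k - xk j := by
        rw [hvs k, hvs j]; abel
      rwa [heq] at h
    have hvCauchy : CauchySeq vs := by
      have hxkC : CauchySeq xk := hlim.cauchySeq
      rw [Metric.cauchySeq_iff] at hxkC ⊢
      intro εp hεp
      obtain ⟨N, hN⟩ := hxkC (εp / (c' + 1)) (by positivity)
      refine ⟨N, fun m hm k hk2 => ?_⟩
      have h1 := hvdist m k
      have h2 := hN m hm k hk2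
      have h3 : c' * dist (xk m) (xk k) ≤ c' * (εp / (c' + 1)) :=
        mul_le_mul_of_nonneg_left (le_of_lt h2) hc'nn
      have hlt : c' / (c' + 1) < 1 := (div_lt_one (by positivity)).mpr (by linarith only [])
      have h4 : c' * (εp / (c' + 1)) < εp := by
        calc c' * (εp / (c' + 1)) = εp * (c' / (c' + 1)) := by ring
          _ < εp * 1 := mul_lt_mul_of_pos_left hlt hεp
          _ = εp := mul_one εp
      linarith only [h1, h3, h4]
    obtain ⟨v, hvlim⟩ := cauchySeq_tendsto_of_complete hvCauchy
    have hvV : v ∈ S.V 0 := hVclosed vs v hvsV hvlim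
    have hsubten : Filter.Tendsto (fun k => ‖vs k - v‖) Filter.atTop (nhds 0) := by
      have h := (hvlim.sub_const v).norm
      rw [sub_self] at h
      simpa using h
    have hNlim : Filter.Tendsto (fun k => Ncal θ (vs k)) Filter.atTop (nhds (Ncal θ v)) := by
      have hb : ∀ k, ‖Ncal θ (vs k) - Ncal θ v‖ ≤ c' * ‖vs k - v‖ := by
        intro k
        rw [← hNsub _ (hvsV k) _ hvV]
        exact hNlip _ (hVsub _ (hvsV k) _ hvV)
      have h2 : Filter.Tendsto (fun k => c' * ‖vs k - v‖) Filter.atTop (nhds (c' * 0)) :=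
        tendsto_const_nhds.mul hsubten
      have h3 := squeeze_zero_norm hb (by simpa using h2)
      simpa using h3.add_const (Ncal θ v)
    have hsum : Filter.Tendsto xk Filter.atTop (nhds (v + Ncal θ v)) := by
      have hfe : xk = fun k => vs k + Ncal θ (vs k) := funext hvs
      rw [hfe]
      exact hvlim.add hNlim
    exact ⟨v, hvV, tendsto_nhds_unique hlim hsum⟩
  -- coercivity of BE
  have hBEco : ∀ x : H, c₁ * ‖x‖ ^ 2 ≤ (BE.B x x).re := by
    intro x
    have h1 := (hcc x).1
    rw [hBre]
    have h2 := S.a_nonneg θ hθ x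
    nlinarith only [h1, h2, hεge1]
  obtain ⟨hfaddF, hfsmulF, Cf, hCfF⟩ := hf
  -- bound M'
  set M' := max M 0 with hM'def
  have hM'nn : (0 : ℝ) ≤ M' := le_max_right _ _
  have hM' : ∀ w : H, ‖f w‖ ≤ M' * S.nrm θ w := fun w =>
    (hM w).trans (mul_le_mul_of_nonneg_right (le_max_left _ _) (hnrmθnn w))
  have hM'M : M' ^ 2 ≤ M ^ 2 := by
    rcases max_choice M 0 with h | h <;> rw [hM'def, h] <;> nlinarith only [sq_nonneg M]
  -- main existence/uniqueness
  have hmain := BE.exists_unique_sol c₁ hc₁ hBEco MG hMG0 hMGadd hMGsmul hMGclosed f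
    hfaddF hfsmulF ⟨Cf, hCfF⟩
  obtain ⟨x₀, ⟨⟨w₀, hw₀V, hx₀⟩, hx₀sol⟩, hx₀uniq⟩ := hmain
  constructor
  · -- existence and uniqueness of v₀
    refine ⟨w₀, ⟨hw₀V, ?_⟩, ?_⟩
    · intro vt hvt
      have hmem : vt + Ncal θ vt ∈ MG := ⟨vt, hvt, rfl⟩
      have h := hx₀sol _ hmem
      rw [hBEB, hx₀] at h
      exact h
    · rintro y ⟨hyV, hyP⟩
      have hyMG : y + Ncal θ y ∈ MG := ⟨y, hyV, rfl⟩
      have hysol : ∀ m ∈ MG, BE.B (y + Ncal θ y) m = f m := by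
        rintro m ⟨vt, hvt, rfl⟩
        rw [hBEB]
        exact hyP vt hvt
      have heq : y + Ncal θ y = x₀ := hx₀uniq _ ⟨hyMG, hysol⟩
      rw [hx₀] at heq
      have hdV : y - w₀ ∈ S.V 0 := hVsub _ hyV _ hw₀V
      have hdW : y - w₀ ∈ S.W 0 := by
        have h2 : y - w₀ = Ncal θ w₀ - Ncal θ y :=
          sub_eq_sub_iff_add_eq_add.mpr (heq.trans (add_comm w₀ (Ncal θ w₀)))
        rw [h2]
        exact hWsub _ (hNW _ hw₀V) _ (hNW _ hyV)
      exact sub_eq_zero.mp (hVW0 _ hdV hdW)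
  · -- error estimates
    intro v₀ hv₀V hP
    set x₀' := v₀ + Ncal θ v₀ with hx₀'def
    set e := u - x₀' with hedef
    have hBu : ∀ w : H, BE.B u w = f w := by
      intro w; rw [hBEB]; exact hu w
    have hGal : ∀ vt ∈ S.V 0, BE.B e (vt + Ncal θ vt) = 0 := by
      intro vt hvt
      have e1 : BE.B e (vt + Ncal θ vt) = BE.B u (vt + Ncal θ vt) - BE.B x₀' (vt + Ncal θ vt) := by
        rw [hedef]; exact BE.subL u x₀' _
      have e2 : BE.B x₀' (vt + Ncal θ vt) = f (vt + Ncal θ vt) := by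
        rw [hBEB, hx₀'def]
        exact hP vt hvt
      rw [e1, e2, hBu, sub_self]
    -- decompose e
    have hipco : ∀ x : H, d₁ * ‖x‖ ^ 2 ≤ (ipO.B x x).re := by
      intro x
      have h1 := hdd1 x
      have h2 : (ipO.B x x).re = S.nsq 0 x := rfl
      linarith only [h1, h2]
    have hdecomp := ipO.exists_unique_sol d₁ hd₁ hipco (S.V 0) hV0 hVadd hVsmul hVclosed
      (fun m => S.ip 0 e m)
      (by intro x y
          have t := ipO.addR e x y
          rw [hipOB] at t
          exact t)
      (by intro t x
          have tt := ipO.smulR t e x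
          rw [hipOB] at tt
          exact tt)
      (by refine ⟨(Ca0 + Cb0) * ‖e‖, fun x => ?_⟩
          show ‖S.ip 0 e x‖ ≤ (Ca0 + Cb0) * ‖e‖ * ‖x‖
          have h1 := hCa0 e x
          have h2 := hCb0 e x
          have h3 := norm_add_le (S.a 0 e x) (S.b 0 e x)
          have h4 : S.ip 0 e x = S.a 0 e x + S.b 0 e x := rfl
          rw [h4]
          nlinarith only [h1, h2, h3, norm_nonneg x, norm_nonneg e])
    obtain ⟨ve, ⟨hveV, hveP⟩, -⟩ := hdecomp
    set ω := e - (ve + Ncal θ ve) with hωdef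
    have hωW : ω ∈ S.W 0 := by
      intro p hp
      have t1 := ipO.subL e (ve + Ncal θ ve) p
      have t2 := ipO.addL ve (Ncal θ ve) p
      rw [hipOB] at t1 t2
      have h2 : S.ip 0 ve p = S.ip 0 e p := hveP p hp
      have h3 : S.ip 0 (Ncal θ ve) p = 0 := (hNW ve hveV) p hp
      rw [hωdef, t1, t2, h2, h3]
      ring
    have hedec : e = (ve + Ncal θ ve) + ω := by rw [hωdef]; abel
    set X := (BE.B e e).re with hXdef
    have hXnn : 0 ≤ X := BE.nn e
    have hMc_a : S.a θ (ve + Ncal θ ve) ω = 0 := hMca ve hveV ω hωW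
    have hMc_a' : S.a θ ω (ve + Ncal θ ve) = 0 := hMca' ve hveV ω hωW
    have i2 : S.a θ e ω = S.a θ ω ω := by
      have t1 := aT.addL (ve + Ncal θ ve) ω ω
      rw [haTB] at t1
      rw [hedec, t1, hMc_a, zero_add]
    have i3 : (S.a θ e e).re = (S.a θ (ve + Ncal θ ve) (ve + Ncal θ ve)).re + (S.a θ ω ω).re := by
      have t1 := aT.addL (ve + Ncal θ ve) ω ((ve + Ncal θ ve) + ω)
      have t2 := aT.addR (ve + Ncal θ ve) (ve + Ncal θ ve) ω
      have t3 := aT.addR ω (ve + Ncal θ ve) ω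
      rw [haTB] at t1 t2 t3
      calc (S.a θ e e).re = (S.a θ ((ve + Ncal θ ve) + ω) ((ve + Ncal θ ve) + ω)).re := by
            rw [← hedec]
        _ = _ := by rw [t1, t2, t3, hMc_a, hMc_a', add_zero, zero_add, Complex.add_re]
    have i3' : (S.a θ ω ω).re ≤ (S.a θ e e).re := by
      have hnna := S.a_nonneg θ hθ (ve + Ncal θ ve)
      linarith only [i3, hnna]
    have i1 : BE.B e e = BE.B e ω := by
      have t1 := BE.addR e (ve + Ncal θ ve) ω
      calc BE.B e e = BE.B e ((ve + Ncal θ ve) + ω) := by rw [← hedec]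
        _ = BE.B e (ve + Ncal θ ve) + BE.B e ω := t1
        _ = BE.B e ω := by rw [hGal ve hveV, zero_add]
    have i5 : BE.B e ω = f ω - S.b θ x₀' ω := by
      have t1 : BE.B e ω = BE.B u ω - BE.B x₀' ω := by
        rw [hedef]; exact BE.subL u x₀' ω
      have t2 : BE.B x₀' ω = S.b θ x₀' ω := by
        rw [show BE.B x₀' ω = ((((ε ^ 2)⁻¹ : ℝ)) : ℂ) * S.a θ x₀' ω + S.b θ x₀' ω from rfl,
          hx₀'def, hMca v₀ hv₀V ω hωW, mul_zero, zero_add]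
      rw [t1, hBu, t2]
    have hXu : (BE.B u u).re ≤ M' ^ 2 := by
      have h1 : (BE.B u u).re = (f u).re := by rw [hBu u]
      have h2 : (f u).re ≤ ‖f u‖ := by
        have := Complex.re_le_norm (f u)
        exact this
      have h3 := hM' u
      have h4 : S.nsq θ u ≤ (BE.B u u).re := by
        rw [hBre, hnsq]
        nlinarith only [S.a_nonneg θ hθ u, hεge1, S.b_nonneg θ hθ u]
      have h5 : S.nrm θ u ≤ Real.sqrt ((BE.B u u).re) := Real.sqrt_le_sqrt h4
      have h6 : 0 ≤ (BE.B u u).re := BE.nn u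
      have hs : Real.sqrt ((BE.B u u).re) ^ 2 = (BE.B u u).re := Real.sq_sqrt h6
      nlinarith only [h1, h2, h3, h5, hM'nn, Real.sqrt_nonneg ((BE.B u u).re), hs,
        sq_nonneg (Real.sqrt ((BE.B u u).re) - M'), norm_nonneg (f u)]
    have hbx₀' : (S.b θ x₀' x₀').re ≤ M' ^ 2 := by
      have t0 : u = x₀' + e := by rw [hedef]; abel
      have hz1 : BE.B e x₀' = 0 := by
        rw [hx₀'def]; exact hGal v₀ hv₀V
      have hz2 : BE.B x₀' e = 0 := by
        rw [BE.herm e x₀', hz1, map_zero]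
      have hBuu : BE.B u u = BE.B x₀' x₀' + BE.B e e := by
        calc BE.B u u = BE.B (x₀' + e) (x₀' + e) := by rw [← t0]
          _ = _ := by rw [BE.addL x₀' e (x₀' + e), BE.addR x₀' x₀' e, BE.addR e x₀' e, hz1, hz2]; ring
      have h1 : (BE.B u u).re = (BE.B x₀' x₀').re + X := by
        rw [hBuu, Complex.add_re, hXdef]
      have h2 : (S.b θ x₀' x₀').re ≤ (BE.B x₀' x₀').re := by
        rw [hBre]
        nlinarith only [S.a_nonneg θ hθ x₀', hεinv]
      linarith only [hXu, h1, h2, hXnn]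
    have hνinv : (0 : ℝ) ≤ ν₀⁻¹ := inv_nonneg.mpr (le_of_lt hν₀)
    have h3ε : (S.a θ e e).re ≤ ε ^ 2 * X := by
      have ht := hBre e e
      have hb := S.b_nonneg θ hθ e
      have hinv : ε ^ 2 * (ε ^ 2)⁻¹ = 1 := mul_inv_cancel₀ (ne_of_gt hε2)
      have h4 : (ε ^ 2)⁻¹ * (S.a θ e e).re ≤ X := by
        rw [hXdef]; linarith only [ht, hb]
      calc (S.a θ e e).re = ε ^ 2 * ((ε ^ 2)⁻¹ * (S.a θ e e).re) := by
            rw [← mul_assoc, hinv, one_mul]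
        _ ≤ ε ^ 2 * X := mul_le_mul_of_nonneg_left h4 (le_of_lt hε2)
    have hωsq : S.nsq θ ω ≤ 2 * K ^ 2 * ν₀⁻¹ * ε ^ 2 * X := by
      have h1 := hcoW ω hωW
      have h2 := hKsq ω
      have h4 : S.nsq 0 ω ≤ 2 * ν₀⁻¹ * (S.a θ ω ω).re := by
        have hνne : ν₀ ≠ 0 := ne_of_gt hν₀
        have hv2 : ν₀ / 2 * (2 * ν₀⁻¹ * (S.a θ ω ω).re) = (S.a θ ω ω).re := by
          field_simp
        nlinarith only [h1, hν₀, hv2]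
      have hK2nn : (0 : ℝ) ≤ K ^ 2 := sq_nonneg K
      have h5 : 2 * ν₀⁻¹ * (S.a θ ω ω).re ≤ 2 * ν₀⁻¹ * (ε ^ 2 * X) := by
        have h6 := i3'.trans h3ε
        nlinarith only [h6, hνinv]
      calc S.nsq θ ω ≤ K ^ 2 * S.nsq 0 ω := h2
        _ ≤ K ^ 2 * (2 * ν₀⁻¹ * (S.a θ ω ω).re) := mul_le_mul_of_nonneg_left h4 hK2nn
        _ ≤ K ^ 2 * (2 * ν₀⁻¹ * (ε ^ 2 * X)) := mul_le_mul_of_nonneg_left h5 hK2nn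
        _ = 2 * K ^ 2 * ν₀⁻¹ * ε ^ 2 * X := by ring
    have hfω : (f ω).re ≤ M' * S.nrm θ ω := by
      have h := Complex.re_le_norm (f ω)
      exact h.trans (hM' ω)
    have hsqrtbω : Real.sqrt ((S.b θ ω ω).re) ≤ S.nrm θ ω := by
      have h : (S.b θ ω ω).re ≤ S.nsq θ ω := by
        rw [hnsq]
        have ha := S.a_nonneg θ hθ ω
        linarith only [ha]
      exact Real.sqrt_le_sqrt h
    have hbcs : ‖S.b θ x₀' ω‖ ≤ M' * S.nrm θ ω := by
      have h1 := bT.cs' x₀' ω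
      rw [hbTB] at h1
      have h2 : Real.sqrt ((S.b θ x₀' x₀').re) ≤ M' := by
        have := Real.sqrt_le_sqrt hbx₀'
        rwa [Real.sqrt_sq hM'nn] at this
      calc ‖S.b θ x₀' ω‖ ≤ Real.sqrt ((S.b θ x₀' x₀').re) * Real.sqrt ((S.b θ ω ω).re) := h1
        _ ≤ M' * S.nrm θ ω := mul_le_mul h2 hsqrtbω (Real.sqrt_nonneg _) hM'nn
    have hXbound : X ≤ 2 * M' * S.nrm θ ω := by
      have h1 : X = (f ω).re - (S.b θ x₀' ω).re := by
        rw [hXdef, i1, i5, Complex.sub_re]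
      have h3 := Complex.abs_re_le_norm (S.b θ x₀' ω)
      have h2 : -(S.b θ x₀' ω).re ≤ ‖S.b θ x₀' ω‖ := by
        linarith only [h3, neg_le_abs ((S.b θ x₀' ω).re)]
      linarith only [h1, hfω, hbcs, h2]
    have hK2nn : (0 : ℝ) ≤ K ^ 2 := sq_nonneg K
    have hG : (0 : ℝ) ≤ 2 * K ^ 2 * ν₀⁻¹ * ε ^ 2 :=
      mul_nonneg (mul_nonneg (mul_nonneg (by norm_num) hK2nn) hνinv) (le_of_lt hε2)
    have hnrmω : S.nrm θ ω ≤ Real.sqrt (2 * K ^ 2 * ν₀⁻¹ * ε ^ 2 * X) :=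
      Real.sqrt_le_sqrt hωsq
    have hs2 : Real.sqrt (2 * K ^ 2 * ν₀⁻¹ * ε ^ 2 * X) ^ 2 = 2 * K ^ 2 * ν₀⁻¹ * ε ^ 2 * X :=
      Real.sq_sqrt (mul_nonneg hG hXnn)
    have hest1 : X ≤ 8 * K ^ 2 * ν₀⁻¹ * ε ^ 2 * M' ^ 2 := by
      set s := Real.sqrt (2 * K ^ 2 * ν₀⁻¹ * ε ^ 2 * X) with hsdef
      have hsnn : 0 ≤ s := Real.sqrt_nonneg _
      have hXle : X ≤ 2 * M' * s := by
        have h := mul_le_mul_of_nonneg_left hnrmω (by linarith only [hM'nn] : (0:ℝ) ≤ 2 * M')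
        linarith only [hXbound, h]
      nlinarith only [hXle, hs2, hXnn, hsnn, hM'nn, hG, sq_nonneg (X - 2 * M' * s),
        mul_nonneg hM'nn hsnn, mul_nonneg (mul_nonneg hM'nn hM'nn) hG]
    refine ⟨?_, ?_⟩
    · have hLHS := hBre e e
      have h8 : 8 * K ^ 2 * ν₀⁻¹ * ε ^ 2 * M' ^ 2 ≤ 8 * K ^ 2 * ν₀⁻¹ * ε ^ 2 * M ^ 2 := by
        nlinarith only [hM'M, hG]
      linarith only [hest1, hLHS, h8, hXdef]
    · have j1 : (S.b θ e e).re ≤ (S.b θ e ω).re := by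
        have t1 := hBre e ω
        have t3 : X = (BE.B e ω).re := by rw [hXdef, i1]
        have t4 := hBre e e
        have t5 : (ε ^ 2)⁻¹ * (S.a θ ω ω).re ≤ (ε ^ 2)⁻¹ * (S.a θ e e).re :=
          mul_le_mul_of_nonneg_left i3' hεinv
        rw [i2] at t1
        linarith only [t1, t3, t4, t5, hXdef]
      have j2 : (S.b θ e ω).re ≤ Real.sqrt ((S.b θ e e).re) * S.nrm θ ω := by
        have h1 := bT.cs' e ω
        rw [hbTB] at h1
        have h2 : (S.b θ e ω).re ≤ ‖S.b θ e ω‖ := by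
          have := Complex.re_le_norm (S.b θ e ω)
          exact this
        have h3 : Real.sqrt ((S.b θ e e).re) * Real.sqrt ((S.b θ ω ω).re)
            ≤ Real.sqrt ((S.b θ e e).re) * S.nrm θ ω :=
          mul_le_mul_of_nonneg_left hsqrtbω (Real.sqrt_nonneg _)
        linarith only [h1, h2, h3]
      have j3 : (S.b θ e e).re ≤ S.nsq θ ω := by
        set p := Real.sqrt ((S.b θ e e).re) with hpdef
        have hp : p ^ 2 = (S.b θ e e).re := Real.sq_sqrt (S.b_nonneg θ hθ e)
        have hpnn : 0 ≤ p := Real.sqrt_nonneg _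
        have hnn : 0 ≤ S.nrm θ ω := hnrmθnn ω
        have hnr := hnrmθ ω
        nlinarith only [j1, j2, hp, hpnn, hnn, hnr, sq_nonneg (p - S.nrm θ ω)]
      have hfinal : 2 * K ^ 2 * ν₀⁻¹ * ε ^ 2 * (8 * K ^ 2 * ν₀⁻¹ * ε ^ 2 * M' ^ 2)
          = 16 * K ^ 4 * (ν₀ ^ 2)⁻¹ * ε ^ 4 * M' ^ 2 := by
        rw [show ((ν₀ ^ 2)⁻¹ : ℝ) = ν₀⁻¹ * ν₀⁻¹ by rw [sq, mul_inv]]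
        ring
      have hlast : 16 * K ^ 4 * (ν₀ ^ 2)⁻¹ * ε ^ 4 * M' ^ 2
          ≤ 16 * K ^ 4 * (ν₀ ^ 2)⁻¹ * ε ^ 4 * M ^ 2 := by
        have hnn2 : (0 : ℝ) ≤ 16 * K ^ 4 * (ν₀ ^ 2)⁻¹ * ε ^ 4 := by positivity
        nlinarith only [hM'M, hnn2]
      calc (S.b θ e e).re ≤ S.nsq θ ω := j3
        _ ≤ 2 * K ^ 2 * ν₀⁻¹ * ε ^ 2 * X := hωsq
        _ ≤ 2 * K ^ 2 * ν₀⁻¹ * ε ^ 2 * (8 * K ^ 2 * ν₀⁻¹ * ε ^ 2 * M' ^ 2) :=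
            mul_le_mul_of_nonneg_left hest1 hG
        _ = 16 * K ^ 4 * (ν₀ ^ 2)⁻¹ * ε ^ 4 * M' ^ 2 := hfinal
        _ ≤ 16 * K ^ 4 * (ν₀ ^ 2)⁻¹ * ε ^ 4 * M ^ 2 := hlast
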